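/- Let f be the inverse of v(x) = sgn(x)·√(x - ln(1+x)) on (-1,∞), and define y(v) = v/f(v) for v ≠ 0 and y(0) = √2/2. Then y is continuous on ℝ. -/

import Mathlib

open Real Set Filter Topology

noncomputable def hfun (x : ℝ) : ℝ := x - Real.log (1 + x)

noncomputable def gfun (x : ℝ) : ℝ :=
  Real.sign x * Real.sqrt (x - Real.log (1 + x))

lemma hfun_zero : hfun 0 = 0 := by simp [hfun]

lemma hfun_pos {x : ℝ} (hx : -1 < x) (hx0 : x ≠ 0) : 0 < hfun x := by
  have h1 : (0:ℝ) < 1 + x := by linarith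
  have := Real.log_lt_sub_one_of_pos h1 (by intro h; apply hx0; linarith)
  simp only [hfun]; linarith

lemma hfun_hasDeriv {x : ℝ} (hx : -1 < x) :
    HasDerivAt hfun (1 - 1 / (1 + x)) x := by
  have h1 : (1:ℝ) + x ≠ 0 := (by linarith : (0:ℝ) < 1 + x).ne'
  have hl : HasDerivAt (fun y : ℝ => Real.log (1 + y)) (1 / (1 + x)) x := by
    have := ((hasDerivAt_id x).const_add 1).log h1
    simpa using this
  exact (hasDerivAt_id' x).sub hl

lemma hfun_continuousOn : ContinuousOn hfun (Ioi (-1 : ℝ)) := by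
  intro x hx
  exact ((hfun_hasDeriv hx).continuousAt).continuousWithinAt

lemma hfun_strictMonoOn : StrictMonoOn hfun (Ici (0:ℝ)) := by
  apply strictMonoOn_of_deriv_pos (convex_Ici 0)
  · exact hfun_continuousOn.mono (fun x hx => by simp at hx ⊢; linarith)
  · intro x hx
    simp only [interior_Ici, mem_Ioi] at hx
    rw [(hfun_hasDeriv (by linarith : (-1:ℝ) < x)).deriv]
    rw [one_sub_div ((by linarith : (0:ℝ) < 1 + x).ne')]
    exact div_pos (by linarith) (by linarith)

lemma hfun_strictAntiOn : StrictAntiOn hfun (Ioc (-1:ℝ) 0) := by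
  apply strictAntiOn_of_deriv_neg (convex_Ioc (-1) 0)
  · exact hfun_continuousOn.mono (fun x hx => hx.1)
  · intro x hx
    rw [interior_Ioc, mem_Ioo] at hx
    rw [(hfun_hasDeriv hx.1).deriv]
    have h1 : (0:ℝ) < 1 + x := by linarith
    rw [one_sub_div (ne_of_gt h1)]
    apply div_neg_of_neg_of_pos _ h1
    linarith

lemma gfun_eq (x : ℝ) : gfun x = Real.sign x * Real.sqrt (hfun x) := rfl

lemma gfun_zero : gfun 0 = 0 := by simp [gfun]

lemma gfun_neg {x : ℝ} (hx : x < 0) : gfun x = -Real.sqrt (hfun x) := by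
  rw [gfun_eq, Real.sign_of_neg hx]; ring

lemma gfun_pos' {x : ℝ} (hx : 0 < x) : gfun x = Real.sqrt (hfun x) := by
  rw [gfun_eq, Real.sign_of_pos hx]; ring

lemma gfun_strictMonoOn : StrictMonoOn gfun (Ioi (-1:ℝ)) := by
  intro a ha b hb hab
  simp only [mem_Ioi] at ha hb
  rcases lt_trichotomy b 0 with hb0 | hb0 | hb0
  · -- a < b < 0
    rw [gfun_neg (hab.trans hb0), gfun_neg hb0, neg_lt_neg_iff]
    apply Real.sqrt_lt_sqrt (le_of_lt (hfun_pos hb (ne_of_lt hb0)))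
    exact hfun_strictAntiOn ⟨ha, by linarith⟩ ⟨hb, le_of_lt hb0⟩ hab
  · -- b = 0
    subst hb0
    rw [gfun_zero, gfun_neg hab, neg_lt, neg_zero]
    exact Real.sqrt_pos.2 (hfun_pos ha (ne_of_lt hab))
  · -- b > 0
    rcases lt_trichotomy a 0 with ha0 | ha0 | ha0
    · rw [gfun_neg ha0, gfun_pos' hb0]
      calc -Real.sqrt (hfun a) < 0 := by
            rw [neg_lt, neg_zero]; exact Real.sqrt_pos.2 (hfun_pos ha (ne_of_lt ha0))
        _ < Real.sqrt (hfun b) := Real.sqrt_pos.2 (hfun_pos hb (ne_of_gt hb0))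
    · subst ha0
      rw [gfun_zero, gfun_pos' hb0]
      exact Real.sqrt_pos.2 (hfun_pos hb (ne_of_gt hb0))
    · rw [gfun_pos' ha0, gfun_pos' hb0]
      exact Real.sqrt_lt_sqrt (le_of_lt (hfun_pos ha (ne_of_gt ha0)))
        (hfun_strictMonoOn (le_of_lt ha0) (le_of_lt (ha0.trans hab)) hab)

lemma ratio_tendsto :
    Tendsto (fun x : ℝ => hfun x / x ^ 2) (𝓝[≠] (0:ℝ)) (𝓝 (1/2)) := by
  apply HasDerivAt.lhopital_zero_nhdsNE
    (f' := fun x => 1 - 1 / (1 + x)) (g' := fun x => 2 * x)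
  · filter_upwards [eventually_nhdsWithin_of_eventually_nhds
      (eventually_gt_nhds (by norm_num : (-1:ℝ) < 0))] with x hx
    exact hfun_hasDeriv hx
  · filter_upwards with x
    simpa using (hasDerivAt_pow 2 x)
  · filter_upwards [self_mem_nhdsWithin] with x hx
    simp only [mem_compl_iff, mem_singleton_iff] at hx
    simpa using hx
  · have : ContinuousAt hfun 0 := (hfun_hasDeriv (by norm_num)).continuousAt
    have := this.tendsto
    rw [hfun_zero] at this
    exact this.mono_left nhdsWithin_le_nhds
  · have : Tendsto (fun x : ℝ => x ^ 2) (𝓝 0) (𝓝 (0^2)) := (continuous_pow 2).tendsto 0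
    simpa using this.mono_left nhdsWithin_le_nhds
  · have key : Tendsto (fun x : ℝ => 1 / (2 * (1 + x))) (𝓝 0) (𝓝 (1/2)) := by
      have : ContinuousAt (fun x : ℝ => 1 / (2 * (1 + x))) 0 := by
        apply ContinuousAt.div continuousAt_const (by fun_prop)
        norm_num
      simpa using this.tendsto
    apply Tendsto.congr' _ (key.mono_left nhdsWithin_le_nhds)
    filter_upwards [self_mem_nhdsWithin, eventually_nhdsWithin_of_eventually_nhds
      (eventually_gt_nhds (by norm_num : (-1:ℝ) < 0))] with x hx hx1
    simp only [mem_compl_iff, mem_singleton_iff] at hx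
    have h1 : (1:ℝ) + x ≠ 0 := (by linarith : (0:ℝ) < 1 + x).ne'
    field_simp
    ring

lemma gfun_div_tendsto :
    Tendsto (fun x : ℝ => gfun x / x) (𝓝[≠] (0:ℝ)) (𝓝 (Real.sqrt 2 / 2)) := by
  have hs : Real.sqrt (1/2) = Real.sqrt 2 / 2 := by
    rw [show (1:ℝ)/2 = 2 / 2^2 by norm_num, Real.sqrt_div (by norm_num),
      Real.sqrt_sq (by norm_num)]
  have key : Tendsto (fun x : ℝ => Real.sqrt (hfun x / x ^ 2)) (𝓝[≠] (0:ℝ))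
      (𝓝 (Real.sqrt 2 / 2)) := by
    rw [← hs]
    exact (Real.continuous_sqrt.tendsto _).comp ratio_tendsto
  apply Tendsto.congr' _ key
  filter_upwards [self_mem_nhdsWithin, eventually_nhdsWithin_of_eventually_nhds
    (eventually_gt_nhds (by norm_num : (-1:ℝ) < 0))] with x hx hx1
  simp only [mem_compl_iff, mem_singleton_iff] at hx
  rw [Real.sqrt_div (le_of_lt (hfun_pos hx1 hx)), Real.sqrt_sq_eq_abs]
  rcases lt_or_gt_of_ne hx with h | h
  · rw [gfun_neg h, abs_of_neg h, div_neg, neg_div]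
  · rw [gfun_pos' h, abs_of_pos h]

theorem stmt_5 (f : ℝ → ℝ)
    (hf : ∀ u : ℝ, f u ∈ Set.Ioi (-1 : ℝ) ∧
      Real.sign (f u) * Real.sqrt (f u - Real.log (1 + f u)) = u) :
    Continuous (fun v : ℝ => if v = 0 then Real.sqrt 2 / 2 else v / f v) := by
  have hmem : ∀ u, f u ∈ Ioi (-1:ℝ) := fun u => (hf u).1
  have hgf : ∀ u, gfun (f u) = u := fun u => (hf u).2
  have hinj : Function.Injective f := by
    intro a b hab
    have := hgf a; rw [hab, hgf b] at this; exact this.symm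
  have hf0 : f 0 = 0 := by
    have h0 : gfun (f 0) = gfun 0 := by rw [hgf, gfun_zero]
    exact gfun_strictMonoOn.injOn (hmem 0) (by norm_num) h0
  have hfg : ∀ x ∈ Ioi (-1:ℝ), f (gfun x) = x := by
    intro x hx
    exact gfun_strictMonoOn.injOn (hmem _) hx (hgf (gfun x))
  have hmono : StrictMono f := by
    intro a b hab
    rcases lt_trichotomy (f a) (f b) with h | h | h
    · exact h
    · exact absurd (hinj h) (ne_of_lt hab)
    · have := gfun_strictMonoOn (hmem b) (hmem a) h
      rw [hgf, hgf] at this; exact absurd hab (not_lt.2 (le_of_lt this))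
  have hrange : range f = Ioi (-1:ℝ) := by
    apply Subset.antisymm
    · rintro _ ⟨u, rfl⟩; exact hmem u
    · intro x hx; exact ⟨gfun x, hfg x hx⟩
  have hcont : Continuous f := by
    rw [continuous_iff_continuousAt]
    intro a
    apply (hmono.strictMonoOn univ).continuousAt_of_image_mem_nhds univ_mem
    rw [image_univ, hrange]
    exact isOpen_Ioi.mem_nhds (hmem a)
  have hfne : ∀ v : ℝ, v ≠ 0 → f v ≠ 0 := by
    intro v hv hc
    exact hv (hinj (hc.trans hf0.symm))
  have hlim : Tendsto (fun v : ℝ => v / f v) (𝓝[≠] (0:ℝ)) (𝓝 (Real.sqrt 2 / 2)) := by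
    have hftend : Tendsto f (𝓝[≠] (0:ℝ)) (𝓝[≠] (0:ℝ)) := by
      rw [tendsto_nhdsWithin_iff]
      constructor
      · have := hcont.continuousAt (x := 0)
        rw [ContinuousAt, hf0] at this
        exact this.mono_left nhdsWithin_le_nhds
      · filter_upwards [self_mem_nhdsWithin] with v hv
        exact hfne v hv
    have := gfun_div_tendsto.comp hftend
    apply Tendsto.congr _ this
    intro v
    simp only [Function.comp_apply, hgf]
  rw [continuous_iff_continuousAt]
  intro a
  by_cases ha : a = 0
  · subst ha
    rw [ContinuousAt, if_pos rfl, ← nhdsNE_sup_pure, tendsto_sup]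
    constructor
    · apply Tendsto.congr' _ hlim
      filter_upwards [self_mem_nhdsWithin] with v hv
      simp only [mem_compl_iff, mem_singleton_iff] at hv
      rw [if_neg hv]
    · rw [tendsto_pure_left]
      intro s hs
      simpa using mem_of_mem_nhds hs
  · have : ContinuousAt (fun v : ℝ => v / f v) a :=
      continuousAt_id.div (hcont.continuousAt) (hfne a ha)
    apply this.congr
    filter_upwards [isOpen_compl_singleton.mem_nhds (by simpa using ha)] with v hv
    simp only [mem_compl_iff, mem_singleton_iff] at hv
    rw [if_neg hv]
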